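/- (Optimally tuned risks and monotonicity in the aspect ratio.) Let η_* := SNR_{μ₀}⁻¹ and OPT^#_{(Σ,μ₀)} := 𝓡^#_{(Σ,μ₀)}(η_*)/σ_ξ² for # ∈ {pred, est, ins}. Then: OPT^pred = φτ_{η_*,*}/η_* − 1, OPT^est = (1−φ)/η_* + 1/τ_{η_*,*}, OPT^ins = −η_*/τ_{η_*,*} + φ. Consequently: (1) OPT^est = SNR_{μ₀}·(1 − φ + φ/(OPT^pred + 1)) and OPT^ins = φ·OPT^pred/(OPT^pred + 1); and (2) viewing φ as a continuous parameter (with τ_{η_*,*} determined by the second fixed-point equation), ∂_φ OPT^pred ≤ 0, ∂_φ OPT^est ≤ 0, and ∂_φ OPT^ins ≥ 0. -/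

import Mathlib

noncomputable section

open MeasureTheory ProbabilityTheory Matrix Filter Set
open scoped Classical

namespace Ridge

/-- Euclidean norm on `Fin n → ℝ`. -/
def vnorm {n : ℕ} (x : Fin n → ℝ) : ℝ := Real.sqrt (∑ i, x i ^ 2)

/-- Sup-norm on `Fin n → ℝ`. -/
def vnormInf {n : ℕ} (x : Fin n → ℝ) : ℝ := ⨆ i, |x i|

/-- ℓ_q quasi-norm (real exponent `q ∈ (0,∞)`). -/
def vnormQ {n : ℕ} (q : ℝ) (x : Fin n → ℝ) : ℝ := (∑ i, |x i| ^ q) ^ (1 / q)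

/-- ℓ₂ → ℓ₂ operator norm of a matrix. -/
def opNorm {m n : ℕ} (A : Matrix (Fin m) (Fin n) ℝ) : ℝ :=
  sSup {r : ℝ | ∃ x : Fin n → ℝ, vnorm x ≤ 1 ∧ r = vnorm (A.mulVec x)}

/-- `H_Σ = tr(Σ⁻¹)/n`. -/
def HSigma {n : ℕ} (S : Matrix (Fin n) (Fin n) ℝ) : ℝ := Matrix.trace S⁻¹ / n

/-- `Ξ_K = [1_{φ⁻¹ < 1+1/K}·K⁻¹, K]` where `φ⁻¹ = n/m`. -/
def XiSet (m n : ℕ) (K : ℝ) : Set ℝ :=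
  Set.Icc (if (n : ℝ) / m < 1 + 1 / K then K⁻¹ else 0) K

/-- Euclidean ball of radius `R` in `ℝⁿ`. -/
def ball (n : ℕ) (R : ℝ) : Set (Fin n → ℝ) := {x | vnorm x ≤ R}

/-- `(Σ + τ I)⁻¹`. -/
def resolv {n : ℕ} (S : Matrix (Fin n) (Fin n) ℝ) (τ : ℝ) : Matrix (Fin n) (Fin n) ℝ :=
  (S + τ • (1 : Matrix (Fin n) (Fin n) ℝ))⁻¹

/-- `sqS` is the (unique) p.s.d. square root of the (invertible) covariance `S`. -/
def IsCovSqrt {n : ℕ} (S sqS : Matrix (Fin n) (Fin n) ℝ) : Prop :=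
  S.PosDef ∧ sqS.PosSemidef ∧ sqS * sqS = S

/-- `lam` enumerates the eigenvalues of `S` in decreasing order `λ₁ ≥ ⋯ ≥ λ_n`. -/
def IsEigenSeq {n : ℕ} (S : Matrix (Fin n) (Fin n) ℝ) (lam : Fin n → ℝ) : Prop :=
  S.charpoly = ∏ i : Fin n, (Polynomial.X - Polynomial.C (lam i)) ∧
    ∀ i j : Fin n, i ≤ j → lam j ≤ lam i

/-- Second fixed point equation: `φ - η/τ = n⁻¹ tr((Σ+τI)⁻¹Σ)`, with `τ > 0`. -/
def IsTauSol {n : ℕ} (m : ℕ) (S : Matrix (Fin n) (Fin n) ℝ) (η τ : ℝ) : Prop :=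
  0 < τ ∧ (m : ℝ) / n - η / τ = (n : ℝ)⁻¹ * Matrix.trace (resolv S τ * S)

/-- The fixed point equation (2.7); note that
`‖(Σ+τI)⁻¹Σ^{1/2}μ₀‖² = ⟪μ₀, (Σ+τI)⁻¹Σ(Σ+τI)⁻¹μ₀⟫`. -/
def IsFPESol {n : ℕ} (m : ℕ) (S : Matrix (Fin n) (Fin n) ℝ) (μ₀ : Fin n → ℝ)
    (σ η γ τ : ℝ) : Prop :=
  0 < γ ∧ IsTauSol m S η τ ∧
    (m : ℝ) / n * γ ^ 2
      = σ ^ 2 + τ ^ 2 * (μ₀ ⬝ᵥ (resolv S τ * S * resolv S τ).mulVec μ₀)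
        + γ ^ 2 * ((n : ℝ)⁻¹ * Matrix.trace (S * S * (resolv S τ * resolv S τ)))

/-- product of standard Gaussians on `ι → ℝ`. -/
def gaussianPi (ι : Type) [Fintype ι] : Measure (ι → ℝ) :=
  Measure.pi fun _ => ProbabilityTheory.gaussianReal 0 1

/-- Ridge estimator `μ̂^seq(γ;τ) = (Σ+τI)⁻¹Σ^{1/2}(Σ^{1/2}μ₀ + γ g/√n)` in the sequence model. -/
def muSeq {n : ℕ} (S sqS : Matrix (Fin n) (Fin n) ℝ) (μ₀ : Fin n → ℝ) (γ τ : ℝ)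
    (g : Fin n → ℝ) : Fin n → ℝ :=
  (resolv S τ * sqS).mulVec (sqS.mulVec μ₀ + (γ / Real.sqrt n) • g)

/-- `E 𝗀(μ̂^seq_{(Σ,μ₀)}(γ;τ))`, the expectation over `g ~ N(0, I_n)`. -/
def seqExp {n : ℕ} (S sqS : Matrix (Fin n) (Fin n) ℝ) (μ₀ : Fin n → ℝ) (γ τ : ℝ)
    (G : (Fin n → ℝ) → ℝ) : ℝ :=
  ∫ g, G (muSeq S sqS μ₀ γ τ g) ∂gaussianPi (Fin n)

/-- Ridge estimator `μ̂_η = (XᵀX/n + ηI)⁻¹XᵀY/n`, `η > 0`. -/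
def ridgePos {m n : ℕ} (X : Matrix (Fin m) (Fin n) ℝ) (Y : Fin m → ℝ) (η : ℝ) : Fin n → ℝ :=
  (((n : ℝ)⁻¹ • (Xᵀ * X) + η • (1 : Matrix (Fin n) (Fin n) ℝ))⁻¹).mulVec
    ((n : ℝ)⁻¹ • Xᵀ.mulVec Y)

/-- Ridge(less) estimator: for `η = 0` it is the minimum-ℓ₂-norm least squares solution
`(XᵀX)⁻XᵀY`, which equals the limit of `μ̂_η` as `η ↓ 0`. -/
def ridge {m n : ℕ} (X : Matrix (Fin m) (Fin n) ℝ) (Y : Fin m → ℝ) (η : ℝ) : Fin n → ℝ :=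
  if η = 0 then limUnder (nhdsWithin 0 (Set.Ioi (0 : ℝ))) fun t => ridgePos X Y t
  else ridgePos X Y η

/-- scaled residual `r̂_η = (Y - Xμ̂_η)/√n`. -/
def residHat {m n : ℕ} (X : Matrix (Fin m) (Fin n) ℝ) (Y : Fin m → ℝ) (η : ℝ) : Fin m → ℝ :=
  (Real.sqrt n)⁻¹ • (Y - X.mulVec (ridge X Y η))

/-- a mean-zero, unit-variance probability law on `ℝ` with sub-Gaussian tail constant `c`. -/
def SubGLaw (c : ℝ) (ν : Measure ℝ) : Prop :=
  IsProbabilityMeasure ν ∧ (∫ x, x ∂ν) = 0 ∧ (∫ x, x ^ 2 ∂ν) = 1 ∧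
    ∀ t : ℝ, 0 ≤ t → ν {x | t ≤ |x|} ≤ ENNReal.ofReal (2 * Real.exp (-t ^ 2 / c))

/-- Design assumption: independent, mean-zero, unit-variance, uniformly sub-Gaussian entries. -/
def IsSubGDesign {Ω : Type} [MeasurableSpace Ω] (P : Measure Ω) {m n : ℕ} (c : ℝ)
    (Z : Ω → Fin m → Fin n → ℝ) : Prop :=
  (∀ i j, Measurable fun ω => Z ω i j) ∧
    iIndepFun
      (fun (p : Fin m × Fin n) ω => Z ω p.1 p.2) P ∧
    ∀ i j, SubGLaw c (P.map fun ω => Z ω i j)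

/-- Gaussian design: i.i.d. `N(0,1)` entries. -/
def IsGaussDesign {Ω : Type} [MeasurableSpace Ω] (P : Measure Ω) {m n : ℕ}
    (Z : Ω → Fin m → Fin n → ℝ) : Prop :=
  (∀ i j, Measurable fun ω => Z ω i j) ∧
    P.map (fun ω => fun p : Fin m × Fin n => Z ω p.1 p.2) = gaussianPi (Fin m × Fin n)

/-- Noise assumption: i.i.d. mean-zero, unit-variance, uniformly sub-Gaussian entries. -/
def IsSubGNoise {Ω : Type} [MeasurableSpace Ω] (P : Measure Ω) {m : ℕ} (c : ℝ)
    (ξ₀ : Ω → Fin m → ℝ) : Prop :=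
  (∀ i, Measurable fun ω => ξ₀ ω i) ∧
    iIndepFun (fun (i : Fin m) ω => ξ₀ ω i) P ∧
    (∀ i j, P.map (fun ω => ξ₀ ω i) = P.map fun ω => ξ₀ ω j) ∧
    ∀ i, SubGLaw c (P.map fun ω => ξ₀ ω i)

/-- design matrix `X = Z Σ^{1/2}`. -/
def designX {m n : ℕ} (sqS : Matrix (Fin n) (Fin n) ℝ) (z : Fin m → Fin n → ℝ) :
    Matrix (Fin m) (Fin n) ℝ := Matrix.of z * sqS

/-- response `Y = X μ₀ + σ ξ₀`. -/
def respY {m n : ℕ} (sqS : Matrix (Fin n) (Fin n) ℝ) (μ₀ : Fin n → ℝ) (σ : ℝ)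
    (z : Fin m → Fin n → ℝ) (e : Fin m → ℝ) : Fin m → ℝ :=
  (designX sqS z).mulVec μ₀ + σ • e

/-- one-sided derivative on `[0,∞)`. -/
def dW (f : ℝ → ℝ) (η : ℝ) : ℝ := derivWithin f (Set.Ici (0 : ℝ)) η

/-- `m_η = 1/τ_{η,*}`. -/
def mmOf (τs : ℝ → ℝ) (η : ℝ) : ℝ := (τs η)⁻¹

/-- `m'_η = φ ∂_η τ_{η,*} / τ_{η,*}²`. -/
def mpOf (φ : ℝ) (τs : ℝ → ℝ) (η : ℝ) : ℝ := φ * dW τs η / τs η ^ 2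

/-- `φ·‖μ₀‖²·m_η - (η‖μ₀‖² - σ²)·m'_η`  (= σ²(φ·SNR·m_η - (η·SNR - 1)m'_η)). -/
def rmtCore (φ σ2 b2 η mm mp : ℝ) : ℝ := φ * b2 * mm - (η * b2 - σ2) * mp

/-- `𝓡^pred(η)`; note `σ²(η·SNR-1) = η‖μ₀‖² - σ²`, which also covers `σ = 0`. -/
def rmtPred (φ σ2 b2 η mm mp : ℝ) : ℝ := rmtCore φ σ2 b2 η mm mp / mm ^ 2 - σ2

/-- `𝓡^est(η)`. -/
def rmtEst (φ σ2 b2 η mm mp : ℝ) : ℝ :=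
  b2 * (1 - φ) + σ2 * mm + η / φ * (η * b2 - σ2) * mp

/-- `𝓡^ins(η)`. -/
def rmtIns (φ σ2 b2 η mm mp : ℝ) : ℝ :=
  η ^ 2 / φ * rmtCore φ σ2 b2 η mm mp + σ2 * (φ - 2 * η * mm)

/-- `𝓡^res(η)`. -/
def rmtRes (φ σ2 b2 η mm mp : ℝ) : ℝ := η ^ 2 / φ * rmtCore φ σ2 b2 η mm mp

def rmtPredFn (φ σ2 b2 : ℝ) (τs : ℝ → ℝ) : ℝ → ℝ :=
  fun η => rmtPred φ σ2 b2 η (mmOf τs η) (mpOf φ τs η)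

def rmtEstFn (φ σ2 b2 : ℝ) (τs : ℝ → ℝ) : ℝ → ℝ :=
  fun η => rmtEst φ σ2 b2 η (mmOf τs η) (mpOf φ τs η)

def rmtInsFn (φ σ2 b2 : ℝ) (τs : ℝ → ℝ) : ℝ → ℝ :=
  fun η => rmtIns φ σ2 b2 η (mmOf τs η) (mpOf φ τs η)

def rmtResFn (φ σ2 b2 : ℝ) (τs : ℝ → ℝ) : ℝ → ℝ :=
  fun η => rmtRes φ σ2 b2 η (mmOf τs η) (mpOf φ τs η)

/-- second fixed point equation with a real aspect-ratio parameter `φ`. -/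
def IsTauSolPhi {n : ℕ} (φ : ℝ) (S : Matrix (Fin n) (Fin n) ℝ) (η τ : ℝ) : Prop :=
  0 < τ ∧ φ - η / τ = (n : ℝ)⁻¹ * Matrix.trace (resolv S τ * S)

/-- `OPT^pred = 𝓡^pred(η_*)/σ²`, `η_* = σ²/‖μ₀‖²`. -/
def optPred (φ σ2 b2 : ℝ) (τs : ℝ → ℝ) : ℝ :=
  rmtPred φ σ2 b2 (σ2 / b2) (τs (σ2 / b2))⁻¹
    (φ * deriv τs (σ2 / b2) / τs (σ2 / b2) ^ 2) / σ2

/-- `OPT^est = 𝓡^est(η_*)/σ²`. -/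
def optEst (φ σ2 b2 : ℝ) (τs : ℝ → ℝ) : ℝ :=
  rmtEst φ σ2 b2 (σ2 / b2) (τs (σ2 / b2))⁻¹
    (φ * deriv τs (σ2 / b2) / τs (σ2 / b2) ^ 2) / σ2

/-- `OPT^ins = 𝓡^ins(η_*)/σ²`. -/
def optIns (φ σ2 b2 : ℝ) (τs : ℝ → ℝ) : ℝ :=
  rmtIns φ σ2 b2 (σ2 / b2) (τs (σ2 / b2))⁻¹
    (φ * deriv τs (σ2 / b2) / τs (σ2 / b2) ^ 2) / σ2


section Aux

lemma conj_mul_conj {n : ℕ} (U A B : Matrix (Fin n) (Fin n) ℝ)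
    (hU2 : star U * U = 1) :
    (U * A * star U) * (U * B * star U) = U * (A * B) * star U := by
  have h : star U * (U * B * star U) = B * star U := by
    rw [← Matrix.mul_assoc, ← Matrix.mul_assoc, hU2, Matrix.one_mul]
  calc (U * A * star U) * (U * B * star U)
      = U * A * (star U * (U * B * star U)) := by simp only [Matrix.mul_assoc]
    _ = U * A * (B * star U) := by rw [h]
    _ = U * (A * B) * star U := by simp only [Matrix.mul_assoc]

lemma trace_resolv_mul {n : ℕ} {S : Matrix (Fin n) (Fin n) ℝ} (hS : S.PosDef)
    {τ : ℝ} (hτ : 0 < τ) :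
    Matrix.trace (resolv S τ * S)
      = ∑ i, hS.isHermitian.eigenvalues i / (hS.isHermitian.eigenvalues i + τ) := by
  classical
  set lam := hS.isHermitian.eigenvalues with hlam
  set U : Matrix (Fin n) (Fin n) ℝ :=
    (hS.isHermitian.eigenvectorUnitary : Matrix (Fin n) (Fin n) ℝ) with hUdef
  have hU1 : U * star U = 1 := by rw [hUdef]; simp
  have hU2 : star U * U = 1 := by rw [hUdef]; simp
  have hspec : S = U * Matrix.diagonal lam * star U := by
    have h := hS.isHermitian.spectral_theorem
    simpa using h
  have hpos : ∀ i, 0 < lam i + τ := fun i => add_pos (hS.eigenvalues_pos i) hτ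
  have hSplus : S + τ • (1 : Matrix (Fin n) (Fin n) ℝ)
      = U * Matrix.diagonal (fun i => lam i + τ) * star U := by
    have hd : Matrix.diagonal (fun i => lam i + τ)
        = Matrix.diagonal lam + τ • (1 : Matrix (Fin n) (Fin n) ℝ) := by
      rw [smul_one_eq_diagonal, ← Matrix.diagonal_add]
    rw [hd, Matrix.mul_add, Matrix.add_mul, ← hspec, Matrix.mul_smul, Matrix.smul_mul,
      Matrix.mul_one, hU1]
  have hres : resolv S τ = U * Matrix.diagonal (fun i => (lam i + τ)⁻¹) * star U := by
    rw [resolv, hSplus]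
    refine Matrix.inv_eq_right_inv ?_
    rw [conj_mul_conj U _ _ hU2, Matrix.diagonal_mul_diagonal]
    have h1 : (fun i => (lam i + τ) * (lam i + τ)⁻¹) = fun _ : Fin n => (1:ℝ) := by
      funext i; exact mul_inv_cancel₀ (hpos i).ne'
    rw [h1, Matrix.diagonal_one, Matrix.mul_one, hU1]
  rw [hres]
  conv_lhs => rw [hspec]
  rw [conj_mul_conj U _ _ hU2, Matrix.trace_mul_cycle, ← Matrix.mul_assoc, hU2, Matrix.one_mul,
    Matrix.diagonal_mul_diagonal, Matrix.trace_diagonal]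
  exact Finset.sum_congr rfl fun i _ => by rw [inv_mul_eq_div]

lemma trace_resolv_anti {n : ℕ} {S : Matrix (Fin n) (Fin n) ℝ} (hS : S.PosDef)
    {τ₁ τ₂ : ℝ} (h1 : 0 < τ₁) (h12 : τ₁ ≤ τ₂) :
    Matrix.trace (resolv S τ₂ * S) ≤ Matrix.trace (resolv S τ₁ * S) := by
  rw [trace_resolv_mul hS h1, trace_resolv_mul hS (h1.trans_le h12)]
  refine Finset.sum_le_sum fun i _ => ?_
  have hl := hS.eigenvalues_pos i
  gcongr <;> linarith

lemma trace_resolv_smul_mono {n : ℕ} {S : Matrix (Fin n) (Fin n) ℝ} (hS : S.PosDef)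
    {τ₁ τ₂ : ℝ} (h1 : 0 < τ₁) (h12 : τ₁ ≤ τ₂) :
    τ₁ * Matrix.trace (resolv S τ₁ * S) ≤ τ₂ * Matrix.trace (resolv S τ₂ * S) := by
  rw [trace_resolv_mul hS h1, trace_resolv_mul hS (h1.trans_le h12), Finset.mul_sum,
    Finset.mul_sum]
  refine Finset.sum_le_sum fun i _ => ?_
  have hl := hS.eigenvalues_pos i
  rw [mul_div_assoc', mul_div_assoc', div_le_div_iff₀ (by linarith) (by linarith)]
  nlinarith [mul_le_mul_of_nonneg_right h12 (mul_nonneg hl.le hl.le)]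

lemma deriv_nonpos_of_antitoneOn_Ioi {f : ℝ → ℝ} {p : ℝ} (hp : 0 < p)
    (hf : AntitoneOn f (Set.Ioi 0)) : deriv f p ≤ 0 := by
  by_cases h : DifferentiableAt ℝ f p
  · have hd : HasDerivWithinAt f (deriv f p) (Set.Ioi p) p :=
      h.hasDerivAt.hasDerivWithinAt
    rw [hasDerivWithinAt_iff_tendsto_slope] at hd
    have hne : (Set.Ioi p \ {p} : Set ℝ) = Set.Ioi p :=
      Set.diff_singleton_eq_self (by simp)
    rw [hne] at hd
    refine le_of_tendsto hd ?_
    filter_upwards [self_mem_nhdsWithin] with x hx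
    have hpx : p < x := hx
    rw [slope_def_field]
    apply div_nonpos_of_nonpos_of_nonneg
    · have := hf (Set.mem_Ioi.2 hp) (Set.mem_Ioi.2 (hp.trans hpx)) hpx.le
      linarith
    · linarith
  · simp [deriv_zero_of_not_differentiableAt h]

lemma deriv_nonneg_of_monotoneOn_Ioi {f : ℝ → ℝ} {p : ℝ} (hp : 0 < p)
    (hf : MonotoneOn f (Set.Ioi 0)) : 0 ≤ deriv f p := by
  by_cases h : DifferentiableAt ℝ f p
  · have hd : HasDerivWithinAt f (deriv f p) (Set.Ioi p) p :=
      h.hasDerivAt.hasDerivWithinAt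
    rw [hasDerivWithinAt_iff_tendsto_slope] at hd
    have hne : (Set.Ioi p \ {p} : Set ℝ) = Set.Ioi p :=
      Set.diff_singleton_eq_self (by simp)
    rw [hne] at hd
    refine ge_of_tendsto hd ?_
    filter_upwards [self_mem_nhdsWithin] with x hx
    have hpx : p < x := hx
    rw [slope_def_field]
    apply div_nonneg
    · have := hf (Set.mem_Ioi.2 hp) (Set.mem_Ioi.2 (hp.trans hpx)) hpx.le
      linarith
    · linarith
  · simp [deriv_zero_of_not_differentiableAt h]

end Aux


lemma part6_aux {n : ℕ} {S : Matrix (Fin n) (Fin n) ℝ} (hS : S.PosDef)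
    {η : ℝ} (hηpos : 0 < η) (T : ℝ → ℝ)
    (hT : ∀ p : ℝ, 0 < p → IsTauSolPhi p S η (T p)) (p : ℝ) (hp : 0 < p) :
    deriv (fun p' => p' * T p' / η - 1) p ≤ 0 ∧
    deriv (fun p' => (1 - p') / η + (T p')⁻¹) p ≤ 0 ∧
    0 ≤ deriv (fun p' => -η / T p' + p') p := by
  have hTpos : ∀ q, 0 < q → 0 < T q := fun q hq => (hT q hq).1
  have heq : ∀ q, 0 < q →
      q = η / T q + (n:ℝ)⁻¹ * Matrix.trace (resolv S (T q) * S) := by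
    intro q hq
    have h := (hT q hq).2
    linarith
  have key : ∀ q₁ q₂, 0 < q₁ → q₁ ≤ q₂ →
      T q₂ ≤ T q₁ ∧ η * ((T q₂)⁻¹ - (T q₁)⁻¹) ≤ q₂ - q₁ ∧ q₂ * T q₂ ≤ q₁ * T q₁ := by
    intro q₁ q₂ hq₁ h12
    have hq₂ : 0 < q₂ := lt_of_lt_of_le hq₁ h12
    have hτ₁ : 0 < T q₁ := hTpos q₁ hq₁
    have hτ₂ : 0 < T q₂ := hTpos q₂ hq₂
    have e₁ := heq q₁ hq₁
    have e₂ := heq q₂ hq₂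
    obtain ⟨u₁, hu₁⟩ : ∃ t, Matrix.trace (resolv S (T q₁) * S) = t := ⟨_, rfl⟩
    obtain ⟨u₂, hu₂⟩ : ∃ t, Matrix.trace (resolv S (T q₂) * S) = t := ⟨_, rfl⟩
    rw [hu₁] at e₁
    rw [hu₂] at e₂
    have ha : T q₂ ≤ T q₁ := by
      by_contra hc
      push_neg at hc
      have hg := trace_resolv_anti hS hτ₁ hc.le
      rw [hu₁, hu₂] at hg
      have hg' : (n:ℝ)⁻¹ * u₂ ≤ (n:ℝ)⁻¹ * u₁ :=
        mul_le_mul_of_nonneg_left hg (by positivity)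
      have hd : η / T q₂ < η / T q₁ :=
        div_lt_div_of_pos_left hηpos hτ₁ hc
      linarith
    have hg := trace_resolv_anti hS hτ₂ ha
    rw [hu₁, hu₂] at hg
    have hg' : (n:ℝ)⁻¹ * u₁ ≤ (n:ℝ)⁻¹ * u₂ :=
      mul_le_mul_of_nonneg_left hg (by positivity)
    have hb : η * ((T q₂)⁻¹ - (T q₁)⁻¹) ≤ q₂ - q₁ := by
      have hr : η * ((T q₂)⁻¹ - (T q₁)⁻¹) = η / T q₂ - η / T q₁ := by
        rw [mul_sub, ← div_eq_mul_inv, ← div_eq_mul_inv]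
      linarith
    have hc : q₂ * T q₂ ≤ q₁ * T q₁ := by
      have m₁ : q₁ * T q₁ = η + T q₁ * ((n:ℝ)⁻¹ * u₁) := by
        have h0 : η / T q₁ * T q₁ = η := div_mul_cancel₀ _ hτ₁.ne'
        linear_combination (T q₁) * e₁ + h0
      have m₂ : q₂ * T q₂ = η + T q₂ * ((n:ℝ)⁻¹ * u₂) := by
        have h0 : η / T q₂ * T q₂ = η := div_mul_cancel₀ _ hτ₂.ne'
        linear_combination (T q₂) * e₂ + h0
      have htg := trace_resolv_smul_mono hS hτ₂ ha
      rw [hu₁, hu₂] at htg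
      have hn0 : (0:ℝ) ≤ (n:ℝ)⁻¹ := by positivity
      nlinarith [mul_le_mul_of_nonneg_left htg hn0]
    exact ⟨ha, hb, hc⟩
  refine ⟨?_, ?_, ?_⟩
  · apply deriv_nonpos_of_antitoneOn_Ioi hp
    intro a ha b hb hab
    have hc := (key a b ha hab).2.2
    have hdd : b * T b / η ≤ a * T a / η := by gcongr
    linarith
  · apply deriv_nonpos_of_antitoneOn_Ioi hp
    intro a ha b hb hab
    have hkb := (key a b ha hab).2.1
    have h' : (T b)⁻¹ - (T a)⁻¹ ≤ (b - a) / η := by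
      rw [le_div_iff₀ hηpos]
      linarith
    have e : (1-b)/η = (1-a)/η - (b-a)/η := by ring
    linarith
  · apply deriv_nonneg_of_monotoneOn_Ioi hp
    intro a ha b hb hab
    have hkb := (key a b ha hab).2.1
    have e2 : η / T b - η / T a = η * ((T b)⁻¹ - (T a)⁻¹) := by
      rw [div_eq_mul_inv, div_eq_mul_inv]
      ring
    have na : -η / T a = -(η / T a) := neg_div _ _
    have nb : -η / T b = -(η / T b) := neg_div _ _
    linarith

/-- optimally tuned risks and their monotonicity in the aspect ratio. -/
theorem statement_17 (m n : ℕ) (hm : 0 < m) (hn : 0 < n)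
    (S : Matrix (Fin n) (Fin n) ℝ) (hS : S.PosDef)
    (μ₀ : Fin n → ℝ) (σ : ℝ) (hσ : 0 < σ) (hμ : 0 < vnorm μ₀)
    (τs : ℝ → ℝ) (hτ : ∀ η : ℝ, 0 < η → IsTauSol m S η (τs η)) :
    optPred ((m : ℝ) / n) (σ ^ 2) (vnorm μ₀ ^ 2) τs
        = (m : ℝ) / n * τs (σ ^ 2 / vnorm μ₀ ^ 2) / (σ ^ 2 / vnorm μ₀ ^ 2) - 1 ∧
    optEst ((m : ℝ) / n) (σ ^ 2) (vnorm μ₀ ^ 2) τs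
        = (1 - (m : ℝ) / n) / (σ ^ 2 / vnorm μ₀ ^ 2) +
            (τs (σ ^ 2 / vnorm μ₀ ^ 2))⁻¹ ∧
    optIns ((m : ℝ) / n) (σ ^ 2) (vnorm μ₀ ^ 2) τs
        = -(σ ^ 2 / vnorm μ₀ ^ 2) / τs (σ ^ 2 / vnorm μ₀ ^ 2) + (m : ℝ) / n ∧
    optEst ((m : ℝ) / n) (σ ^ 2) (vnorm μ₀ ^ 2) τs
        = vnorm μ₀ ^ 2 / σ ^ 2 *
            (1 - (m : ℝ) / n +
              (m : ℝ) / n / (optPred ((m : ℝ) / n) (σ ^ 2) (vnorm μ₀ ^ 2) τs + 1)) ∧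
    optIns ((m : ℝ) / n) (σ ^ 2) (vnorm μ₀ ^ 2) τs
        = (m : ℝ) / n * optPred ((m : ℝ) / n) (σ ^ 2) (vnorm μ₀ ^ 2) τs /
            (optPred ((m : ℝ) / n) (σ ^ 2) (vnorm μ₀ ^ 2) τs + 1) ∧
    (∀ T : ℝ → ℝ,
      (∀ p : ℝ, 0 < p → IsTauSolPhi p S (σ ^ 2 / vnorm μ₀ ^ 2) (T p)) →
      ∀ p : ℝ, 0 < p →
        deriv (fun p' => p' * T p' / (σ ^ 2 / vnorm μ₀ ^ 2) - 1) p ≤ 0 ∧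
        deriv (fun p' => (1 - p') / (σ ^ 2 / vnorm μ₀ ^ 2) + (T p')⁻¹) p ≤ 0 ∧
        0 ≤ deriv (fun p' => -(σ ^ 2 / vnorm μ₀ ^ 2) / T p' + p') p) := by
  classical
  have hb2' : (0:ℝ) < vnorm μ₀ ^ 2 := pow_pos hμ 2
  have hσ2 : (0:ℝ) < σ ^ 2 := pow_pos hσ 2
  set b2 := vnorm μ₀ ^ 2 with hb2def
  clear_value b2
  clear hb2def hμ
  have hb2 : (0:ℝ) < b2 := hb2'
  have hηpos : 0 < σ ^ 2 / b2 := div_pos hσ2 hb2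
  have hτpos : 0 < τs (σ ^ 2 / b2) := (hτ _ hηpos).1
  have hφ : (0:ℝ) < (m:ℝ)/n := div_pos (Nat.cast_pos.2 hm) (Nat.cast_pos.2 hn)
  have hb2ne : b2 ≠ 0 := hb2.ne'
  have hσ2ne : σ ^ 2 ≠ 0 := hσ2.ne'
  have hτne : τs (σ ^ 2 / b2) ≠ 0 := hτpos.ne'
  have hηne : σ ^ 2 / b2 ≠ 0 := hηpos.ne'
  have hφne : (m:ℝ)/n ≠ 0 := hφ.ne'
  have hmne : (m:ℝ) ≠ 0 := Nat.cast_ne_zero.2 hm.ne'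
  have hnne : (n:ℝ) ≠ 0 := Nat.cast_ne_zero.2 hn.ne'
  have h1 : optPred ((m:ℝ)/n) (σ^2) b2 τs
      = (m:ℝ)/n * τs (σ ^ 2 / b2) / (σ ^ 2 / b2) - 1 := by
    rw [optPred, rmtPred, rmtCore]
    field_simp
    ring
  have h2 : optEst ((m:ℝ)/n) (σ^2) b2 τs
      = (1 - (m:ℝ)/n) / (σ ^ 2 / b2) + (τs (σ ^ 2 / b2))⁻¹ := by
    rw [optEst, rmtEst]
    field_simp
    ring
  have h3 : optIns ((m:ℝ)/n) (σ^2) b2 τs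
      = -(σ ^ 2 / b2) / τs (σ ^ 2 / b2) + (m:ℝ)/n := by
    rw [optIns, rmtIns, rmtCore]
    field_simp
    ring
  refine ⟨h1, h2, h3, ?_, ?_, ?_⟩
  · rw [h2, h1]
    have h : (m:ℝ)/n * τs (σ ^ 2 / b2) / (σ ^ 2 / b2) - 1 + 1
        = (m:ℝ)/n * τs (σ ^ 2 / b2) / (σ ^ 2 / b2) := by ring
    rw [h]
    field_simp
  · rw [h3, h1]
    have h : (m:ℝ)/n * τs (σ ^ 2 / b2) / (σ ^ 2 / b2) - 1 + 1
        = (m:ℝ)/n * τs (σ ^ 2 / b2) / (σ ^ 2 / b2) := by ring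
    rw [h]
    field_simp
    ring
  · intro T hT p hp
    exact part6_aux hS hηpos T hT p hp

end Ridge
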